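/- Let k be a field of characteristic ≠ 2, V a graded symplectic vector space V = ⊕_i V_i with an s-good grading, and Q ∈ Q(V)_2 a quadratic form with A = A_Q satisfying A(V_i) ⊆ V_{i+2} and Q|_{V_i} = 0 for i ≠ −1. Then Q ∈ Q(V)_2^0 (i.e., A^n : V_{−n} → V_n is an isomorphism for every even n ≥ 0, A^{(n−1)/2} : V_{−n} → V_{−1} is injective for every odd n ≥ 1, and Q restricted to A^{(n−1)/2}(V_{−n}) is nondegenerate) if and only if A^n : V_{−n} → V_n is an isomorphism for every n ≥ 0. -/

import Mathlib

/-- An `s`-good grading of a symplectic vector space `(V, B)`: a direct sum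
decomposition `V = ⊕ V_i` with `dim V_i = dim V_{-i} ≥ dim V_{-i-2}` for `i ≥ 0`,
`dim V_i` even for even `i`, and `B(V_i, V_j) = 0` whenever `i + j ≠ 0`. -/
def SGood (k V : Type*) [Field k] [AddCommGroup V] [Module k V]
    (B : LinearMap.BilinForm k V) (Vg : ℤ → Submodule k V) : Prop :=
  DirectSum.IsInternal Vg ∧
  (∀ i : ℤ, 0 ≤ i →
    Module.finrank k (Vg (-i)) = Module.finrank k (Vg i) ∧
    Module.finrank k (Vg (-i - 2)) ≤ Module.finrank k (Vg (-i))) ∧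
  (∀ i : ℤ, Even i → Even (Module.finrank k (Vg i))) ∧
  (∀ i j : ℤ, i + j ≠ 0 → ∀ x ∈ Vg i, ∀ y ∈ Vg j, B x y = 0)

/-- char ≠ 2, `(V, B)` symplectic with an `s`-good grading, and
`Q ∈ Q(V)₂`, i.e. `A = A_Q` maps `V_i` into `V_{i+2}` and `Q` vanishes on `V_i`
for `i ≠ -1`.  Then `Q ∈ Q(V)₂⁰` (the conditions on the left of the iff) iff
`A^n : V_{-n} → V_n` is an isomorphism for every `n ≥ 0`. -/
theorem QV20_iff_all_iso_char_ne_two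
    (k V : Type*) [Field k] [AddCommGroup V] [Module k V] [FiniteDimensional k V]
    (hchar : (2 : k) ≠ 0)
    (B : LinearMap.BilinForm k V) (halt : B.IsAlt) (hnd : B.Nondegenerate)
    (Vg : ℤ → Submodule k V) (hg : SGood k V B Vg)
    (Q : QuadraticForm k V) (A : Module.End k V)
    (hA : ∀ x y : V, Q (x + y) - Q x - Q y = B (A x) y)
    (hA2 : ∀ i : ℤ, ∀ x ∈ Vg i, A x ∈ Vg (i + 2))
    (hQ0 : ∀ i : ℤ, i ≠ -1 → ∀ x ∈ Vg i, Q x = 0) :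
    ((∀ n : ℕ, Even n →
        (∀ x ∈ Vg (-(n : ℤ)), (A ^ n) x = 0 → x = 0) ∧
        (∀ y ∈ Vg (n : ℤ), ∃ x ∈ Vg (-(n : ℤ)), (A ^ n) x = y)) ∧
      (∀ n : ℕ, Odd n →
        (∀ x ∈ Vg (-(n : ℤ)), (A ^ ((n - 1) / 2)) x = 0 → x = 0) ∧
        (∀ w ∈ ⇑(A ^ ((n - 1) / 2)) '' (Vg (-(n : ℤ)) : Set V),
          (∀ w' ∈ ⇑(A ^ ((n - 1) / 2)) '' (Vg (-(n : ℤ)) : Set V),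
            QuadraticMap.polar Q w w' = 0) → Q w = 0 → w = 0)))
    ↔ (∀ n : ℕ,
        (∀ x ∈ Vg (-(n : ℤ)), (A ^ n) x = 0 → x = 0) ∧
        (∀ y ∈ Vg (n : ℤ), ∃ x ∈ Vg (-(n : ℤ)), (A ^ n) x = y)) := by
  -- basic consequences
  have hpol : ∀ x y : V, QuadraticMap.polar Q x y = B (A x) y := fun x y => hA x y
  have hsym : ∀ x y : V, B (A x) y = B (A y) x := by
    intro x y
    rw [← hA, ← hA, add_comm]; ring
  have hskew : ∀ x y : V, B x (A y) = - B (A x) y := by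
    intro x y
    rw [hsym x y, ← halt.neg_eq (A y) x]
  -- A^j maps Vg i into Vg (i + 2j)
  have hpow : ∀ (j : ℕ) (i : ℤ), ∀ x ∈ Vg i, (A ^ j) x ∈ Vg (i + 2 * j) := by
    intro j
    induction j with
    | zero => intro i x hx; simpa using hx
    | succ j ih =>
      intro i x hx
      have : (A ^ (j + 1)) x = A ((A ^ j) x) := by
        rw [pow_succ', Module.End.mul_apply]
      rw [this]
      have := hA2 (i + 2 * j) _ (ih i x hx)
      convert this using 2
      push_cast; ring
  -- moving powers of A across B
  have hshift : ∀ (j : ℕ) (u v : V),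
      B (A u) ((A ^ j) v) = (-1) ^ j * B ((A ^ (j + 1)) u) v := by
    intro j
    induction j with
    | zero => intro u v; simp
    | succ j ih =>
      intro u v
      have h1 : (A ^ (j + 1)) v = (A ^ j) (A v) := by
        rw [pow_succ, Module.End.mul_apply]
      rw [h1, ih u (A v), hskew]
      have h2 : A ((A ^ (j + 1)) u) = (A ^ (j + 1 + 1)) u := by
        conv_rhs => rw [pow_succ', Module.End.mul_apply]
      rw [h2]; ring
  -- key pairing nondegeneracy between Vg n and Vg (-n)
  have hpair : ∀ (n : ℤ) (x : V), x ∈ Vg n → (∀ y ∈ Vg (-n), B x y = 0) → x = 0 := by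
    intro n x hx h0
    apply hnd.1 x
    intro y
    have hy : y ∈ ⨆ i, Vg i := by
      rw [hg.1.submodule_iSup_eq_top]; trivial
    refine Submodule.iSup_induction (motive := fun y => B x y = 0) Vg hy ?_ (by simp) ?_
    · intro j z hz
      by_cases hj : j = -n
      · exact h0 z (hj ▸ hz)
      · exact hg.2.2.2 n j (by omega) x hx z hz
    · intro a b ha hb; rw [map_add, ha, hb, add_zero]
  -- injectivity implies surjectivity for A^n : Vg(-n) → Vg n
  have hsurj : ∀ n : ℕ, (∀ x ∈ Vg (-(n : ℤ)), (A ^ n) x = 0 → x = 0) →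
      (∀ y ∈ Vg ((n : ℤ)), ∃ x ∈ Vg (-(n : ℤ)), (A ^ n) x = y) := by
    intro n hinj
    have hmt : ∀ x ∈ Vg (-(n : ℤ)), (A ^ n) x ∈ Vg ((n : ℤ)) := by
      intro x hx
      have := hpow n (-(n : ℤ)) x hx
      convert this using 2; ring
    set f : (Vg (-(n : ℤ))) →ₗ[k] (Vg ((n : ℤ))) :=
      ((A ^ n) : V →ₗ[k] V).restrict hmt with hf
    have hfi : Function.Injective f := by
      intro a b hab
      have : (A ^ n) ((a : V) - b) = 0 := by
        have := congrArg (Subtype.val) hab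
        simp only [hf, LinearMap.restrict_apply] at this
        rw [map_sub, this, sub_self]
      have := hinj ((a : V) - b) (sub_mem a.2 b.2) this
      exact Subtype.ext (by rw [← sub_eq_zero]; exact this)
    have hrk : Module.finrank k (Vg (-(n : ℤ))) = Module.finrank k (Vg ((n : ℤ))) :=
      (hg.2.1 n (by positivity)).1
    have hfs : Function.Surjective f :=
      (LinearMap.injective_iff_surjective_of_finrank_eq_finrank hrk).mp hfi
    intro y hy
    obtain ⟨x, hx⟩ := hfs ⟨y, hy⟩
    refine ⟨x, x.2, ?_⟩
    have := congrArg Subtype.val hx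
    simpa [hf, LinearMap.restrict_apply] using this
  constructor
  · rintro ⟨heven, hodd⟩ n
    rcases Nat.even_or_odd n with he | ho
    · exact heven n he
    · obtain ⟨m, hm⟩ := ho
      have hm2 : (n - 1) / 2 = m := by omega
      have hinj : ∀ x ∈ Vg (-(n : ℤ)), (A ^ n) x = 0 → x = 0 := by
        intro x hx hxn
        -- polar vanishing on the image
        have hpv : ∀ (x' : V), x' ∈ Vg (-(n : ℤ)) →
            QuadraticMap.polar Q ((A ^ m) x) ((A ^ m) x') = 0 := by
          intro x' hx'
          rw [hpol]
          have h1 : A ((A ^ m) x) = (A ^ (m + 1)) x := by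
            rw [pow_succ', Module.End.mul_apply]
          rw [h1]
          have h2 : (A ^ (m + 1)) x = A ((A ^ m) x) := by
            rw [pow_succ', Module.End.mul_apply]
          calc B ((A ^ (m + 1)) x) ((A ^ m) x')
              = B (A ((A ^ m) x)) ((A ^ m) x') := by rw [h2]
            _ = (-1) ^ m * B ((A ^ (m + 1)) ((A ^ m) x)) x' := hshift m _ x'
            _ = (-1) ^ m * B ((A ^ n) x) x' := by
                rw [show (A ^ (m + 1)) ((A ^ m) x) = (A ^ n) x by
                  rw [← Module.End.mul_apply, ← pow_add, show m + 1 + m = n by omega]]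
            _ = 0 := by rw [hxn]; simp
        have hwmem : (A ^ ((n - 1) / 2)) x ∈
            ⇑(A ^ ((n - 1) / 2)) '' (Vg (-(n : ℤ)) : Set V) := ⟨x, hx, rfl⟩
        have hw0 : (A ^ ((n - 1) / 2)) x = 0 := by
          refine (hodd n ⟨m, by omega⟩).2 _ hwmem ?_ ?_
          · rintro w' ⟨x', hx', rfl⟩
            rw [hm2]; exact hpv x' hx'
          · -- Q w = 0 from polar self
            have hps : QuadraticMap.polar Q ((A ^ ((n - 1) / 2)) x)
                ((A ^ ((n - 1) / 2)) x) = 0 := by rw [hm2]; exact hpv x hx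
            have := QuadraticMap.polar_self Q ((A ^ ((n - 1) / 2)) x)
            rw [hps] at this
            have h2 : (2 : k) * Q ((A ^ ((n - 1) / 2)) x) = 0 := by
              have := this.symm
              rwa [two_smul, ← two_mul] at this
            rcases mul_eq_zero.mp h2 with h | h
            · exact absurd h hchar
            · exact h
        exact (hodd n ⟨m, by omega⟩).1 x hx hw0
      exact ⟨hinj, hsurj n hinj⟩
  · intro h
    refine ⟨fun n _ => h n, fun n ho => ?_⟩
    obtain ⟨m, hm⟩ := ho
    have hm2 : (n - 1) / 2 = m := by omega
    constructor
    · intro x hx hmx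
      apply (h n).1 x hx
      rw [show n = (m + 1) + (n - 1) / 2 by omega, pow_add, Module.End.mul_apply, hmx,
        map_zero]
    · rintro w ⟨x, hx, rfl⟩ hpolar _
      have key : (A ^ n) x = 0 := by
        have hmem : (A ^ n) x ∈ Vg ((n : ℤ)) := by
          have := hpow n (-(n : ℤ)) x hx
          convert this using 2; ring
        refine hpair (n : ℤ) _ hmem ?_
        intro x' hx'
        have hp := hpolar ((A ^ ((n - 1) / 2)) x') ⟨x', hx', rfl⟩
        rw [hpol, hm2] at hp
        have h1 : A ((A ^ m) x) = (A ^ (m + 1)) x := by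
          rw [pow_succ', Module.End.mul_apply]
        rw [h1] at hp
        have h2 : (A ^ (m + 1)) x = A ((A ^ m) x) := by
          rw [pow_succ', Module.End.mul_apply]
        rw [h2, hshift m _ x'] at hp
        rw [show (A ^ (m + 1)) ((A ^ m) x) = (A ^ n) x by
          rw [← Module.End.mul_apply, ← pow_add, show m + 1 + m = n by omega]] at hp
        have hne : ((-1 : k) ^ m) ≠ 0 := by
          apply pow_ne_zero; norm_num
        exact (mul_eq_zero.mp hp).resolve_left hne
      have hx0 : x = 0 := (h n).1 x hx key
      rw [hx0, map_zero]
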